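/- Every subtree (connected subgraph) of a Markov tree, with the labeling inherited from the original tree, is itself a Markov tree. -/

import Mathlib

open scoped NNReal

/-- A family of compatible frames (f.c.f.): a collection of finite nonempty frames
together with (unique) refinings between them, closed under composition, containing
identities, with minimal common refinements (binary joins). -/
structure FCF where
  /-- the frames of the family -/
  Frame : Type
  /-- the elements of each frame -/
  El : Frame → Type
  elFintype : ∀ Θ, Fintype (El Θ)
  elNonempty : ∀ Θ, Nonempty (El Θ)
  /-- `le Θ Λ` holds iff the family contains a refining of `Θ` to `Λ`. -/
  le : Frame → Frame → Prop
  le_refl : ∀ Θ, le Θ Θ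
  le_trans : ∀ {Θ Λ Ξ}, le Θ Λ → le Λ Ξ → le Θ Ξ
  le_antisymm : ∀ {Θ Λ}, le Θ Λ → le Λ Θ → Θ = Λ
  /-- the (unique) refining map of `Θ` to `Λ`, when `le Θ Λ` -/
  τ : ∀ {Θ Λ}, le Θ Λ → El Θ → Set (El Λ)
  τ_nonempty : ∀ {Θ Λ} (h : le Θ Λ) (θ : El Θ), (τ h θ).Nonempty
  τ_disjoint : ∀ {Θ Λ} (h : le Θ Λ) (θ θ' : El Θ), θ ≠ θ' → τ h θ ∩ τ h θ' = ∅
  τ_cover : ∀ {Θ Λ} (h : le Θ Λ) (x : El Λ), ∃ θ, x ∈ τ h θ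
  /-- the identity refining -/
  τ_refl : ∀ {Θ} (h : le Θ Θ) (θ : El Θ), τ h θ = {θ}
  /-- closure under composition of refinings -/
  τ_comp : ∀ {Θ Λ Ξ} (h₁ : le Θ Λ) (h₂ : le Λ Ξ) (h₃ : le Θ Ξ) (θ : El Θ),
    τ h₃ θ = ⋃ lam ∈ τ h₁ θ, τ h₂ lam
  /-- identity of coarsenings: two coarsenings of a frame with the same blocks coincide -/
  coarsening_unique : ∀ {Θ₁ Θ₂ Λ} (h₁ : le Θ₁ Λ) (h₂ : le Θ₂ Λ),
    (∀ θ₁, ∃ θ₂, τ h₁ θ₁ = τ h₂ θ₂) → (∀ θ₂, ∃ θ₁, τ h₁ θ₁ = τ h₂ θ₂) → Θ₁ = Θ₂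
  /-- minimal common refinement of two frames -/
  sup : Frame → Frame → Frame
  le_sup_left : ∀ Θ Λ, le Θ (sup Θ Λ)
  le_sup_right : ∀ Θ Λ, le Λ (sup Θ Λ)
  sup_le : ∀ {Θ Λ Ξ}, le Θ Ξ → le Λ Ξ → le (sup Θ Λ) Ξ
  /-- every element of the minimal common refinement is the (unique) intersection point
  of a block of each factor -/
  sup_atom : ∀ {Θ Λ} (h₁ : le Θ (sup Θ Λ)) (h₂ : le Λ (sup Θ Λ)) (x : El (sup Θ Λ)),
    ∃ (θ : El Θ) (lam : El Λ), τ h₁ θ ∩ τ h₂ lam = {x}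

namespace FCF

instance (F : FCF) (Θ : F.Frame) : Fintype (F.El Θ) := F.elFintype Θ

instance (F : FCF) (Θ : F.Frame) : Nonempty (F.El Θ) := F.elNonempty Θ

instance instSemilatticeSup (F : FCF) : SemilatticeSup F.Frame where
  le := F.le
  le_refl := F.le_refl
  le_trans := fun _ _ _ => F.le_trans
  le_antisymm := fun _ _ => F.le_antisymm
  sup := F.sup
  le_sup_left := F.le_sup_left
  le_sup_right := F.le_sup_right
  sup_le := fun _ _ _ h h' => F.sup_le h h'

/-- the indicator potential `f_p` of the support of a potential -/
noncomputable def fpot {X : Type} (p : X → ℝ≥0) : X → ℝ≥0 := fun x =>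
  haveI := Classical.propDecidable (0 < p x)
  if 0 < p x then 1 else 0

/-- the support of a potential -/
def psupp {X : Type} (p : X → ℝ≥0) : Set X := {x | 0 < p x}

/-- the likelihood (plausibility of singletons) function of a set potential -/
noncomputable def plfn {X : Type} (m : Set X → ℝ≥0) : X → ℝ≥0 :=
  fun x => ∑ᶠ (S : Set X) (_ : x ∈ S), m S

variable (F : FCF)

/-- `θ` and `lam` are compatible: their refinings to the minimal common refinement
of the two frames intersect. -/
def compat {Θ Λ : F.Frame} (θ : F.El Θ) (lam : F.El Λ) : Prop :=
  (F.τ (F.le_sup_left Θ Λ) θ ∩ F.τ (F.le_sup_right Θ Λ) lam).Nonempty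

/-- `(θ₁, θ₂, lam) ∈ R(Θ₁, Θ₂, Λ)`: joint compatibility of a triple. -/
def compat3 {Θ₁ Θ₂ Λ : F.Frame} (θ₁ : F.El Θ₁) (θ₂ : F.El Θ₂) (lam : F.El Λ) : Prop :=
  (F.τ (F.le_trans (F.le_sup_left Θ₁ Θ₂) (F.le_sup_left (F.sup Θ₁ Θ₂) Λ)) θ₁ ∩
    F.τ (F.le_trans (F.le_sup_right Θ₁ Θ₂) (F.le_sup_left (F.sup Θ₁ Θ₂) Λ)) θ₂ ∩
    F.τ (F.le_sup_right (F.sup Θ₁ Θ₂) Λ) lam).Nonempty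

/-- `Θ₁ ⊥ Θ₂ | Λ` : conditional independence of two frames given a third,
`R_λ(Θ₁,Θ₂) = R_λ(Θ₁) × R_λ(Θ₂)` for every `λ ∈ Λ`. -/
def CondIndep (Θ₁ Θ₂ Λ : F.Frame) : Prop :=
  ∀ (lam : F.El Λ) (θ₁ : F.El Θ₁) (θ₂ : F.El Θ₂),
    F.compat3 θ₁ θ₂ lam ↔ (F.compat θ₁ lam ∧ F.compat θ₂ lam)

/-- joint compatibility of a family of elements together with `lam`. -/
def compatFam {ι : Type} {Θ : ι → F.Frame} {Λ : F.Frame}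
    (θ : ∀ i, F.El (Θ i)) (lam : F.El Λ) : Prop :=
  ∃ (Ξ : F.Frame) (hΘ : ∀ i, F.le (Θ i) Ξ) (hΛ : F.le Λ Ξ) (x : F.El Ξ),
    (∀ i, x ∈ F.τ (hΘ i) (θ i)) ∧ x ∈ F.τ hΛ lam

/-- `⊥ {Θ_i : i ∈ ι} | Λ` : conditional independence of a family of frames given `Λ`,
`R_λ(Θ₁,…,Θₙ) = R_λ(Θ₁) × ⋯ × R_λ(Θₙ)` for every `λ ∈ Λ`. -/
def CondIndepFam {ι : Type} (Θ : ι → F.Frame) (Λ : F.Frame) : Prop :=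
  ∀ (lam : F.El Λ) (θ : ∀ i, F.El (Θ i)),
    F.compatFam θ lam ↔ ∀ i, F.compat (θ i) lam

/-- `t_Λ(x)`, the unique element of the coarsening `Λ` whose block contains `x`. -/
noncomputable def proj {Λ Θ : F.Frame} (h : F.le Λ Θ) (x : F.El Θ) : F.El Λ :=
  (F.τ_cover h x).choose

/-- probability potentials on the frame `Θ` -/
abbrev Pot (Θ : F.Frame) : Type := F.El Θ → ℝ≥0

/-- the combination of two probability potentials, on the join of their domains -/
noncomputable def combine {Θ₁ Θ₂ : F.Frame} (p₁ : F.Pot Θ₁) (p₂ : F.Pot Θ₂) :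
    F.Pot (F.sup Θ₁ Θ₂) :=
  fun x => p₁ (F.proj (F.le_sup_left Θ₁ Θ₂) x) * p₂ (F.proj (F.le_sup_right Θ₁ Θ₂) x)

/-- the transport `π_Λ(p)` of a probability potential to the frame `Λ` -/
noncomputable def transport {Θ : F.Frame} (p : F.Pot Θ) (Λ : F.Frame) : F.Pot Λ :=
  fun lam => ∑ᶠ (θ : F.El Θ) (_ : F.compat θ lam), p θ

/-- the max-transport `t^max_Λ(p)` of a probability potential to the frame `Λ` -/
noncomputable def maxTransport {Θ : F.Frame} (p : F.Pot Θ) (Λ : F.Frame) : F.Pot Λ :=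
  fun lam => ⨆ (θ : F.El Θ) (_ : F.compat θ lam), p θ

/-- combination of two set potentials, on the join of their domains -/
noncomputable def setCombine {Θ₁ Θ₂ : F.Frame} (m₁ : Set (F.El Θ₁) → ℝ≥0)
    (m₂ : Set (F.El Θ₂) → ℝ≥0) : Set (F.El (F.sup Θ₁ Θ₂)) → ℝ≥0 :=
  fun S => ∑ᶠ (S₁ : Set (F.El Θ₁)) (S₂ : Set (F.El Θ₂))
    (_ : (⋃ θ ∈ S₁, F.τ (F.le_sup_left Θ₁ Θ₂) θ) ∩
         (⋃ θ ∈ S₂, F.τ (F.le_sup_right Θ₁ Θ₂) θ) = S),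
    m₁ S₁ * m₂ S₂

/-- the conditional `p_{Θ|Λ} = π_Θ(p) · (π_Λ(p))⁻¹` of `p` for `Θ` given `Λ ≤ Θ` -/
noncomputable def condl {Δ : F.Frame} (p : F.Pot Δ) {Λ Θ : F.Frame} (h : F.le Λ Θ) :
    F.Pot Θ :=
  fun θ => F.transport p Θ θ * (F.transport p Λ (F.proj h θ))⁻¹

/-- the conditional `p_{Θ|Λ} = π_{Θ∨Λ}(p) · (π_Λ(p))⁻¹` of `p` for arbitrary `Θ` given `Λ` -/
noncomputable def condl2 {Δ : F.Frame} (p : F.Pot Δ) (Θ Λ : F.Frame) :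
    F.Pot (F.sup Θ Λ) :=
  fun x => F.transport p (F.sup Θ Λ) x *
    (F.transport p Λ (F.proj (F.le_sup_right Θ Λ) x))⁻¹

/-- the solution set `s_p^Λ(lam)`: maximizers of `p` among elements compatible with `lam` -/
noncomputable def solSet {Θ : F.Frame} (p : F.Pot Θ) (Λ : F.Frame) (lam : F.El Λ) :
    Set (F.El Θ) :=
  {θ | F.compat θ lam ∧ p θ = F.maxTransport p Λ lam}

end FCF

namespace FCF

/-- the vertex set `V_{v,w}` of the subtree containing `w` obtained by deleting `v` -/
def subtreeVerts {V : Type} (G : SimpleGraph V) (v w : V) : Set V :=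
  {u | ∃ p : G.Walk w u, v ∉ p.support}

theorem subtreeVerts_nonempty {V : Type} (G : SimpleGraph V) {v w : V}
    (h : G.Adj v w) : (subtreeVerts G v w).Nonempty := by
  refine ⟨w, SimpleGraph.Walk.nil, ?_⟩
  simpa using h.ne

/-- the join `Λ(U) = ⋁_{v ∈ U} Λ(v)` of the labels of a (finite, nonempty) set of nodes -/
noncomputable def setSup (F : FCF) {V : Type} [Finite V] (lab : V → F.Frame)
    (S : Set V) (hS : S.Nonempty) : F.Frame :=
  S.toFinite.toFinset.sup' (by simpa using hS) lab

/-- a labeled tree `(T, Λ)` is a Markov tree if for every node `v`,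
`⊥ {Λ(V_{v,w}) : w ∈ ne(v)} | Λ(v)`. -/
def IsMarkovTree (F : FCF) {V : Type} [Finite V] (G : SimpleGraph V)
    (lab : V → F.Frame) : Prop :=
  G.IsTree ∧ ∀ v : V, F.CondIndepFam
    (fun w : {w : V // G.Adj v w} =>
      F.setSup lab (subtreeVerts G v w.1) (subtreeVerts_nonempty G w.2))
    (lab v)

section Helpers

variable (F : FCF)

lemma mem_τ_unique {Θ Λ : F.Frame} (h : F.le Θ Λ) {θ θ' : F.El Θ} {x : F.El Λ}
    (hx : x ∈ F.τ h θ) (hx' : x ∈ F.τ h θ') : θ = θ' := by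
  by_contra hne
  have := F.τ_disjoint h θ θ' hne
  have : x ∈ (∅ : Set (F.El Λ)) := this ▸ ⟨hx, hx'⟩
  exact this.elim

lemma proj_mem {Λ Θ : F.Frame} (h : F.le Λ Θ) (x : F.El Θ) :
    x ∈ F.τ h (F.proj h x) := (F.τ_cover h x).choose_spec

lemma mem_τ_trans {A B C : F.Frame} (hab : F.le A B) (hbc : F.le B C) (hac : F.le A C)
    {a : F.El A} {b : F.El B} {c : F.El C}
    (h1 : b ∈ F.τ hab a) (h2 : c ∈ F.τ hbc b) : c ∈ F.τ hac a := by
  rw [F.τ_comp hab hbc hac]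
  exact Set.mem_biUnion h1 h2

lemma compat_of_common {Θ Λ Ξ : F.Frame} (hΘ : F.le Θ Ξ) (hΛ : F.le Λ Ξ)
    {θ : F.El Θ} {lam : F.El Λ} {x : F.El Ξ}
    (h1 : x ∈ F.τ hΘ θ) (h2 : x ∈ F.τ hΛ lam) : F.compat θ lam := by
  have hs : F.le (F.sup Θ Λ) Ξ := F.sup_le hΘ hΛ
  set y := F.proj hs x with hy_def
  have hy : x ∈ F.τ hs y := F.proj_mem hs x
  have h1' : x ∈ ⋃ z ∈ F.τ (F.le_sup_left Θ Λ) θ, F.τ hs z := by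
    rw [← F.τ_comp (F.le_sup_left Θ Λ) hs hΘ]; exact h1
  obtain ⟨z, hz, hxz⟩ := Set.mem_iUnion₂.mp h1'
  have hzy : z = y := F.mem_τ_unique hs hxz hy
  have h2' : x ∈ ⋃ z ∈ F.τ (F.le_sup_right Θ Λ) lam, F.τ hs z := by
    rw [← F.τ_comp (F.le_sup_right Θ Λ) hs hΛ]; exact h2
  obtain ⟨z', hz', hxz'⟩ := Set.mem_iUnion₂.mp h2'
  have hzy' : z' = y := F.mem_τ_unique hs hxz' hy
  exact ⟨y, hzy ▸ hz, hzy' ▸ hz'⟩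

lemma compat_elim {Θ Λ Ξ : F.Frame} (hΘ : F.le Θ Ξ) (hΛ : F.le Λ Ξ)
    {θ : F.El Θ} {lam : F.El Λ} (h : F.compat θ lam) :
    ∃ x, x ∈ F.τ hΘ θ ∧ x ∈ F.τ hΛ lam := by
  obtain ⟨y, hyθ, hylam⟩ := h
  have hs : F.le (F.sup Θ Λ) Ξ := F.sup_le hΘ hΛ
  obtain ⟨x, hx⟩ := F.τ_nonempty hs y
  exact ⟨x, F.mem_τ_trans (F.le_sup_left Θ Λ) hs hΘ hyθ hx,
    F.mem_τ_trans (F.le_sup_right Θ Λ) hs hΛ hylam hx⟩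

lemma exists_compat (Θ Λ : F.Frame) (lam : F.El Λ) : ∃ θ : F.El Θ, F.compat θ lam := by
  obtain ⟨x, hx⟩ := F.τ_nonempty (F.le_sup_right Θ Λ) lam
  exact ⟨F.proj (F.le_sup_left Θ Λ) x, ⟨x, F.proj_mem (F.le_sup_left Θ Λ) x, hx⟩⟩

lemma exists_lift {Λ' Θ Λ : F.Frame} (h : F.le Λ' Θ) {lam' : F.El Λ'} {lam : F.El Λ}
    (hc : F.compat lam' lam) : ∃ θ, θ ∈ F.τ h lam' ∧ F.compat θ lam := by
  have hΘΞ := F.le_sup_left Θ Λ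
  have hΛΞ := F.le_sup_right Θ Λ
  have hΛ'Ξ := F.le_trans h hΘΞ
  obtain ⟨x, hx1, hx2⟩ := F.compat_elim hΛ'Ξ hΛΞ hc
  set θ := F.proj hΘΞ x with hθ_def
  have hxθ : x ∈ F.τ hΘΞ θ := F.proj_mem hΘΞ x
  have h1' : x ∈ ⋃ z ∈ F.τ h lam', F.τ hΘΞ z := by
    rw [← F.τ_comp h hΘΞ hΛ'Ξ]; exact hx1
  obtain ⟨z, hz, hxz⟩ := Set.mem_iUnion₂.mp h1'
  have hzθ : z = θ := F.mem_τ_unique hΘΞ hxz hxθ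
  exact ⟨θ, hzθ ▸ hz, F.compat_of_common hΘΞ hΛΞ hxθ hx2⟩

/-- Conditional independence of a family passes to coarsenings of a subfamily. -/
lemma condIndepFam_mono {ι ι' : Type} {Θ : ι → F.Frame} {Θ' : ι' → F.Frame} {Λ : F.Frame}
    (e : ι' → ι) (he : Function.Injective e) (hle : ∀ i, F.le (Θ' i) (Θ (e i)))
    (h : F.CondIndepFam Θ Λ) : F.CondIndepFam Θ' Λ := by
  intro lam θ'
  constructor
  · rintro ⟨Ξ, hΘ, hΛ, x, hx1, hx2⟩ i
    exact F.compat_of_common (hΘ i) hΛ (hx1 i) hx2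
  · intro hc
    classical
    have key : ∀ j : ι, ∃ θ : F.El (Θ j), F.compat θ lam ∧
        ∀ i, e i = j → ∃ hh : F.le (Θ' i) (Θ j), θ ∈ F.τ hh (θ' i) := by
      intro j
      by_cases hj : ∃ i, e i = j
      · obtain ⟨i, rfl⟩ := hj
        obtain ⟨θ, hθ1, hθ2⟩ := F.exists_lift (hle i) (hc i)
        refine ⟨θ, hθ2, ?_⟩
        intro i' hi'
        cases he hi'
        exact ⟨hle i, hθ1⟩
      · obtain ⟨θ, hθ⟩ := F.exists_compat (Θ j) Λ lam
        exact ⟨θ, hθ, fun i hi => absurd ⟨i, hi⟩ hj⟩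
    choose θ hθ1 hθ2 using key
    obtain ⟨Ξ, hΘΞ, hΛΞ, x, hx1, hx2⟩ := (h lam θ).mpr hθ1
    refine ⟨Ξ, fun i => F.le_trans (hle i) (hΘΞ (e i)), hΛΞ, x, ?_, hx2⟩
    intro i
    obtain ⟨hh, hmem⟩ := hθ2 (e i) i rfl
    exact F.mem_τ_trans hh (hΘΞ (e i)) _ hmem (hx1 (e i))

end Helpers

lemma subtreeVerts_induce_subset {V : Type} (G : SimpleGraph V) (S : Set V)
    {v w u : ↥S} (hu : u ∈ subtreeVerts (G.induce S) v w) :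
    (u : V) ∈ subtreeVerts G (v : V) (w : V) := by
  obtain ⟨p, hp⟩ := hu
  refine ⟨p.map (SimpleGraph.Embedding.induce (G := G) S).toHom, ?_⟩
  erw [SimpleGraph.Walk.support_map]
  simp only [List.mem_map, not_exists, not_and]
  intro x hx hxv
  have : x = v := Subtype.ext hxv
  exact hp (this ▸ hx)

/-- Every connected subgraph of a Markov tree, with the inherited
labeling, is itself a Markov tree. -/
theorem isMarkovTree_induce (F : FCF) {V : Type} [Finite V] (G : SimpleGraph V)
    (lab : V → F.Frame) (hT : F.IsMarkovTree G lab)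
    (S : Set V) (hconn : (G.induce S).Connected) :
    F.IsMarkovTree (G.induce S) (fun v => lab v.1) := by
  obtain ⟨hTree, hCI⟩ := hT
  constructor
  · refine ⟨hconn, ?_⟩
    intro a c hc
    have hinj : Function.Injective ⇑(SimpleGraph.Embedding.induce (G := G) S).toHom := by
      intro x y hxy
      exact Subtype.ext hxy
    exact hTree.IsAcyclic (c.map (SimpleGraph.Embedding.induce (G := G) S).toHom) (hc.map hinj)
  · intro v
    refine F.condIndepFam_mono
      (e := fun w : {w : ↥S // (G.induce S).Adj v w} =>
        (⟨w.1.1, w.2⟩ : {w : V // G.Adj v.1 w})) ?_ ?_ (hCI v.1)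
    · intro a b hab
      apply Subtype.ext
      apply Subtype.ext
      simpa using congrArg Subtype.val hab
    · intro w
      show F.setSup (fun u : ↥S => lab u.1) (subtreeVerts (G.induce S) v w.1)
          (subtreeVerts_nonempty _ w.2) ≤
        F.setSup lab (subtreeVerts G v.1 w.1.1) (subtreeVerts_nonempty _ w.2)
      apply Finset.sup'_le
      intro u hu
      rw [Set.Finite.mem_toFinset] at hu
      have hu' : (u : V) ∈ subtreeVerts G (v : ↥S) w.1.1 :=
        subtreeVerts_induce_subset G S hu
      exact Finset.le_sup' lab (Set.Finite.mem_toFinset _ |>.mpr hu')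

end FCF
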